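/- If θ ↦ w_s(θ)·w_g(θ) is monotone nonincreasing on [0, π], then the supremum of SINR over all of ℝ² equals its supremum over the central cell: for every (x,y) ∈ ℝ² there exists (x',y') with |x'| ≤ Δ/2 and |y'| ≤ √3Δ/2 such that SINR(x',y') ≥ SINR(x,y). -/

import Mathlib

open Real

/-- Distance from ground point `(x, y, 0)` to satellite `s_{i,j} = (iΔ/2, j√3Δ/2, h)`. -/
noncomputable def Dfun (Δ h : ℝ) (i j : ℤ) (x y : ℝ) : ℝ :=
  Real.sqrt ((x - i * Δ / 2) ^ 2 + (y - j * Real.sqrt 3 * Δ / 2) ^ 2 + h ^ 2)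

/-- Off-axis angle `θ_{i,j}(x,y) = arccos(h / D_{i,j}(x,y))`. -/
noncomputable def θfun (Δ h : ℝ) (i j : ℤ) (x y : ℝ) : ℝ :=
  Real.arccos (h / Dfun Δ h i j x y)

/-- Combined beam attenuation `W_{i,j}(x,y) = w_s(θ_{i,j}(x,y))·w_g(θ_{i,j}(x,y))`. -/
noncomputable def Wfun (ws wg : ℝ → ℝ) (Δ h : ℝ) (i j : ℤ) (x y : ℝ) : ℝ :=
  ws (θfun Δ h i j x y) * wg (θfun Δ h i j x y)

/-- Signal-to-noise ratio at the ground point `(x, y)`, served by satellite `s_{0,0}`. -/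
noncomputable def SNR (ws wg : ℝ → ℝ) (Δ h α p σ2 : ℝ) (x y : ℝ) : ℝ :=
  (p / σ2) * Dfun Δ h 0 0 x y ^ (-α) * Wfun ws wg Δ h 0 0 x y

/-- Interference-to-noise ratio at the ground point `(x, y)`: sum over all satellites
`(i,j)` with `i ≡ j (mod 2)` other than `(0,0)`. -/
noncomputable def INR (ws wg : ℝ → ℝ) (Δ h α p σ2 : ℝ) (x y : ℝ) : ℝ :=
  (p / σ2) * ∑' q : ℤ × ℤ,
    if q.1 % 2 = q.2 % 2 ∧ q ≠ (0, 0) then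
      Dfun Δ h q.1 q.2 x y ^ (-α) * Wfun ws wg Δ h q.1 q.2 x y
    else 0

/-- `SINR(x,y) = SNR(x,y) / (INR(x,y) + 1)`. -/
noncomputable def SINR (ws wg : ℝ → ℝ) (Δ h α p σ2 : ℝ) (x y : ℝ) : ℝ :=
  SNR ws wg Δ h α p σ2 x y / (INR ws wg Δ h α p σ2 x y + 1)

lemma h_le_Dfun (Δ h : ℝ) (hh : 0 < h) (i j : ℤ) (x y : ℝ) : h ≤ Dfun Δ h i j x y := by
  have : h = Real.sqrt (h ^ 2) := by rw [Real.sqrt_sq hh.le]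
  rw [this, Dfun]
  apply Real.sqrt_le_sqrt
  nlinarith [sq_nonneg (x - i * Δ / 2), sq_nonneg (y - j * Real.sqrt 3 * Δ / 2), Real.sq_sqrt hh.le]

lemma Dfun_pos (Δ h : ℝ) (hh : 0 < h) (i j : ℤ) (x y : ℝ) : 0 < Dfun Δ h i j x y :=
  lt_of_lt_of_le hh (h_le_Dfun Δ h hh i j x y)

lemma Dfun_shift (Δ h : ℝ) (i j k l : ℤ) (x y : ℝ) :
    Dfun Δ h i j (x - k * Δ) (y - l * (Real.sqrt 3 * Δ)) = Dfun Δ h (i + 2*k) (j + 2*l) x y := by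
  unfold Dfun
  push_cast
  ring_nf

lemma θfun_shift (Δ h : ℝ) (i j k l : ℤ) (x y : ℝ) :
    θfun Δ h i j (x - k * Δ) (y - l * (Real.sqrt 3 * Δ)) = θfun Δ h (i + 2*k) (j + 2*l) x y := by
  unfold θfun; rw [Dfun_shift]

lemma Wfun_shift (ws wg : ℝ → ℝ) (Δ h : ℝ) (i j k l : ℤ) (x y : ℝ) :
    Wfun ws wg Δ h i j (x - k * Δ) (y - l * (Real.sqrt 3 * Δ)) =
      Wfun ws wg Δ h (i + 2*k) (j + 2*l) x y := by
  unfold Wfun; rw [θfun_shift]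

lemma θfun_mem (Δ h : ℝ) (i j : ℤ) (x y : ℝ) : θfun Δ h i j x y ∈ Set.Icc (0:ℝ) π :=
  ⟨Real.arccos_nonneg _, Real.arccos_le_pi _⟩

lemma θfun_mono (Δ h : ℝ) (hh : 0 < h) {i j i' j' : ℤ} {x y x' y' : ℝ}
    (hD : Dfun Δ h i j x y ≤ Dfun Δ h i' j' x' y') :
    θfun Δ h i j x y ≤ θfun Δ h i' j' x' y' := by
  unfold θfun
  rw [Real.arccos_eq_pi_div_two_sub_arcsin, Real.arccos_eq_pi_div_two_sub_arcsin]
  have h1 := Dfun_pos Δ h hh i j x y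
  have : h / Dfun Δ h i' j' x' y' ≤ h / Dfun Δ h i j x y :=
    div_le_div_of_nonneg_left hh.le h1 hD
  linarith [Real.monotone_arcsin this]

noncomputable def fterm (ws wg : ℝ → ℝ) (Δ h α : ℝ) (x y : ℝ) (q : ℤ × ℤ) : ℝ :=
  Dfun Δ h q.1 q.2 x y ^ (-α) * Wfun ws wg Δ h q.1 q.2 x y

noncomputable def Gterm (ws wg : ℝ → ℝ) (Δ h α : ℝ) (x y : ℝ) (q : ℤ × ℤ) : ℝ :=
  if q.1 % 2 = q.2 % 2 then fterm ws wg Δ h α x y q else 0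

lemma Gterm_shift_point (ws wg : ℝ → ℝ) (Δ h α : ℝ) (x y : ℝ) (k l : ℤ) (a b : ℤ) :
    (if a % 2 = b % 2 ∧ ((a, b) : ℤ × ℤ) ≠ (0, 0) then
        Dfun Δ h a b (x - k * Δ) (y - l * (Real.sqrt 3 * Δ)) ^ (-α) *
          Wfun ws wg Δ h a b (x - k * Δ) (y - l * (Real.sqrt 3 * Δ))
      else 0)
    = (if ((a, b) : ℤ × ℤ) + (2*k, 2*l) = (2*k, 2*l) then 0
        else Gterm ws wg Δ h α x y (((a, b) : ℤ × ℤ) + (2*k, 2*l))) := by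
  have h1 : ((a, b) : ℤ × ℤ) + (2*k, 2*l) = (a + 2*k, b + 2*l) := rfl
  rw [h1]
  unfold Gterm fterm
  simp only [Prod.mk.injEq, ne_eq]
  by_cases h0 : a = 0 ∧ b = 0
  · obtain ⟨rfl, rfl⟩ := h0
    simp
  · have hne : ¬(a + 2*k = 2*k ∧ b + 2*l = 2*l) := by omega
    rw [if_neg hne]
    by_cases hq : a % 2 = b % 2
    · have hpar : (a + 2*k) % 2 = (b + 2*l) % 2 := by omega
      rw [if_pos ⟨hq, h0⟩, if_pos hpar, Dfun_shift, Wfun_shift]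
    · have hpar : ¬((a + 2*k) % 2 = (b + 2*l) % 2) := by omega
      rw [if_neg (fun hcc => hq hcc.1), if_neg hpar]

lemma Gterm_point (ws wg : ℝ → ℝ) (Δ h α : ℝ) (x y : ℝ) (a b : ℤ) :
    (if a % 2 = b % 2 ∧ ((a, b) : ℤ × ℤ) ≠ (0, 0) then
        Dfun Δ h a b x y ^ (-α) * Wfun ws wg Δ h a b x y else 0)
    = (if ((a, b) : ℤ × ℤ) = (0, 0) then 0 else Gterm ws wg Δ h α x y (a, b)) := by
  unfold Gterm fterm
  by_cases h0 : ((a, b) : ℤ × ℤ) = (0, 0)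
  · simp [h0]
  · simp only [if_neg h0]
    by_cases hq : a % 2 = b % 2
    · rw [if_pos ⟨hq, h0⟩, if_pos hq]
    · rw [if_neg (fun hcc => hq hcc.1), if_neg hq]

lemma sq_le_of_abs_le'
 {a b : ℝ} (h : |a| ≤ |b|) : a ^ 2 ≤ b ^ 2 := by
  nlinarith [sq_abs a, sq_abs b, abs_nonneg a, abs_nonneg b]


/-- Lemma 1: the supremum of the SINR over the plane equals its supremum over the
central cell: any ground point is dominated by some point of the central cell. -/
theorem sinr_sup_over_central_cell
    (ws wg : ℝ → ℝ) (Δ h α p σ2 : ℝ)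
    (hΔ : 0 < Δ) (hh : 0 < h) (hα : 2 ≤ α) (hp : 0 < p) (hσ : 0 < σ2)
    (hwsnn : ∀ θ ∈ Set.Icc (0 : ℝ) π, 0 ≤ ws θ)
    (hwgnn : ∀ θ ∈ Set.Icc (0 : ℝ) π, 0 ≤ wg θ)
    (hsum : ∀ x y : ℝ, Summable fun q : ℤ × ℤ =>
      if q.1 % 2 = q.2 % 2 ∧ q ≠ (0, 0) then
        Dfun Δ h q.1 q.2 x y ^ (-α) * Wfun ws wg Δ h q.1 q.2 x y
      else 0)
    (hmono : AntitoneOn (fun θ => ws θ * wg θ) (Set.Icc (0 : ℝ) π)) :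
    ∀ x y : ℝ, ∃ x' y' : ℝ, |x'| ≤ Δ / 2 ∧ |y'| ≤ Real.sqrt 3 * Δ / 2 ∧
      SINR ws wg Δ h α p σ2 x y ≤ SINR ws wg Δ h α p σ2 x' y' := by
  intro x y
  have hs3 : (0:ℝ) < Real.sqrt 3 := Real.sqrt_pos.mpr (by norm_num)
  have hs3Δ : (0:ℝ) < Real.sqrt 3 * Δ := mul_pos hs3 hΔ
  set k : ℤ := round (x / Δ) with hk
  set l : ℤ := round (y / (Real.sqrt 3 * Δ)) with hl
  refine ⟨x - k * Δ, y - l * (Real.sqrt 3 * Δ), ?_, ?_, ?_⟩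
  · have h1 := abs_sub_round (x / Δ)
    have he : x - k * Δ = Δ * (x / Δ - k) := by field_simp
    rw [he, abs_mul, abs_of_pos hΔ]
    nlinarith
  · have h1 := abs_sub_round (y / (Real.sqrt 3 * Δ))
    have he : y - l * (Real.sqrt 3 * Δ) = (Real.sqrt 3 * Δ) * (y / (Real.sqrt 3 * Δ) - l) := by
      field_simp
    rw [he, abs_mul, abs_of_pos hs3Δ]
    nlinarith
  · -- main inequality
    set x' : ℝ := x - k * Δ with hx'
    set y' : ℝ := y - l * (Real.sqrt 3 * Δ) with hy'
    have hxabs : |x'| ≤ |x| := by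
      have h1 := round_le (x / Δ) 0
      rw [Int.cast_zero, sub_zero, abs_div, abs_of_pos hΔ] at h1
      have he : x' = Δ * (x / Δ - k) := by rw [hx']; field_simp
      rw [he, abs_mul, abs_of_pos hΔ]
      calc Δ * |x / Δ - k| ≤ Δ * (|x| / Δ) := by nlinarith
        _ = |x| := by field_simp
    have hyabs : |y'| ≤ |y| := by
      have h1 := round_le (y / (Real.sqrt 3 * Δ)) 0
      rw [Int.cast_zero, sub_zero, abs_div, abs_of_pos hs3Δ] at h1
      have he : y' = (Real.sqrt 3 * Δ) * (y / (Real.sqrt 3 * Δ) - l) := by rw [hy']; field_simp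
      rw [he, abs_mul, abs_of_pos hs3Δ]
      calc (Real.sqrt 3 * Δ) * |y / (Real.sqrt 3 * Δ) - l| ≤ (Real.sqrt 3 * Δ) * (|y| / (Real.sqrt 3 * Δ)) := by nlinarith
        _ = |y| := by field_simp
    -- distance comparison
    have hDle : Dfun Δ h (2*k) (2*l) x y ≤ Dfun Δ h 0 0 x y := by
      unfold Dfun
      apply Real.sqrt_le_sqrt
      have e1 : x - ((2*k : ℤ) : ℝ) * Δ / 2 = x' := by push_cast; rw [hx']; ring
      have e2 : y - ((2*l : ℤ) : ℝ) * Real.sqrt 3 * Δ / 2 = y' := by push_cast; rw [hy']; ring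
      rw [e1, e2]
      have h1 := sq_le_of_abs_le' hxabs
      have h2 := sq_le_of_abs_le' hyabs
      have e3 : (x - (0:ℤ) * Δ / 2) ^ 2 = x ^ 2 := by push_cast; ring
      have e4 : (y - (0:ℤ) * Real.sqrt 3 * Δ / 2) ^ 2 = y ^ 2 := by push_cast; ring
      rw [e3, e4]
      linarith
    -- abbreviations
    set c : ℤ × ℤ := (2*k, 2*l) with hc
    set f : (ℤ × ℤ) → ℝ := fterm ws wg Δ h α x y with hf
    set G : (ℤ × ℤ) → ℝ := Gterm ws wg Δ h α x y with hG
    have hfnn : ∀ q : ℤ × ℤ, 0 ≤ f q := by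
      intro q
      refine mul_nonneg (Real.rpow_nonneg (Dfun_pos Δ h hh _ _ _ _).le _) ?_
      exact mul_nonneg (hwsnn _ (θfun_mem Δ h _ _ _ _)) (hwgnn _ (θfun_mem Δ h _ _ _ _))
    have hGnn : ∀ q : ℤ × ℤ, 0 ≤ G q := by
      intro q
      rw [hG, Gterm]
      split
      · exact hfnn q
      · exact le_rfl
    have hWnn : ∀ i j : ℤ, ∀ u v : ℝ, 0 ≤ Wfun ws wg Δ h i j u v := by
      intro i j u v
      exact mul_nonneg (hwsnn _ (θfun_mem Δ h _ _ _ _)) (hwgnn _ (θfun_mem Δ h _ _ _ _))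
    -- monotone term comparison: f (0,0) ≤ f c
    have hfsle : f (0,0) ≤ f c := by
      rw [hf]
      show fterm ws wg Δ h α x y (0,0) ≤ fterm ws wg Δ h α x y (2*k, 2*l)
      unfold fterm
      have hθ : θfun Δ h (2*k) (2*l) x y ≤ θfun Δ h 0 0 x y := θfun_mono Δ h hh hDle
      have hW : Wfun ws wg Δ h 0 0 x y ≤ Wfun ws wg Δ h (2*k) (2*l) x y := by
        have := hmono (θfun_mem Δ h (2*k) (2*l) x y) (θfun_mem Δ h 0 0 x y) hθ
        simpa [Wfun] using this
      have hrp : Dfun Δ h 0 0 x y ^ (-α) ≤ Dfun Δ h (2*k) (2*l) x y ^ (-α) :=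
        Real.rpow_le_rpow_of_nonpos (Dfun_pos Δ h hh _ _ _ _) hDle (by linarith)
      exact mul_le_mul hrp hW (hWnn _ _ _ _) (Real.rpow_nonneg (Dfun_pos Δ h hh _ _ _ _).le _)
    -- summability of G
    have hF := hsum x y
    have he0 : Summable (fun q : ℤ × ℤ => if q = ((0,0) : ℤ × ℤ) then f (0,0) else 0) :=
      summable_of_ne_finset_zero (s := {((0,0) : ℤ × ℤ)}) (fun q hq => if_neg (by simpa using hq))
    have hGsum : Summable G := by
      refine (hF.add he0).congr fun q => ?_
      obtain ⟨a, b⟩ := q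
      rw [Gterm_point ws wg Δ h α x y a b]
      by_cases h0 : ((a, b) : ℤ × ℤ) = ((0,0) : ℤ × ℤ)
      · rw [if_pos h0, if_pos h0, h0, hG, Gterm, if_pos rfl]
        simp [hf]
      · rw [if_neg h0, if_neg h0, add_zero, hG]
    have key : ∀ b : ℤ × ℤ, (∑' q, if q = b then 0 else G q) = (∑' q, G q) - G b := by
      intro b
      have := hGsum.tsum_eq_add_tsum_ite b
      linarith
    -- SNR and INR identities
    have hSNR1 : SNR ws wg Δ h α p σ2 x y = (p / σ2) * G (0,0) := by
      rw [SNR, hG, Gterm, if_pos rfl, fterm]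
      ring
    have hINR1 : INR ws wg Δ h α p σ2 x y = (p / σ2) * ((∑' q, G q) - G (0,0)) := by
      rw [INR]
      congr 1
      rw [← key (0,0)]
      refine tsum_congr fun q => ?_
      obtain ⟨a, b⟩ := q
      rw [Gterm_point ws wg Δ h α x y a b, hG]
    have hSNR2 : SNR ws wg Δ h α p σ2 x' y' = (p / σ2) * G c := by
      rw [SNR, hx', hy', Dfun_shift, Wfun_shift, hG, hc, Gterm, if_pos (by omega), fterm]
      norm_num
      ring
    have hINR2 : INR ws wg Δ h α p σ2 x' y' = (p / σ2) * ((∑' q, G q) - G c) := by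
      rw [INR]
      congr 1
      rw [← key c, ← Equiv.tsum_eq (Equiv.addRight c) (fun q => if q = c then 0 else G q)]
      refine tsum_congr fun q => ?_
      obtain ⟨a, b⟩ := q
      simp only [Equiv.coe_addRight]
      rw [hx', hy', hc, hG]
      exact Gterm_shift_point ws wg Δ h α x y k l a b
    -- final algebra
    have hpσ : 0 < p / σ2 := div_pos hp hσ
    have h0S : 0 ≤ ∑' q, G q := tsum_nonneg hGnn
    have hbs : G (0,0) ≤ ∑' q, G q := Summable.le_tsum hGsum _ (fun _ _ => hGnn _)
    have hbt : G c ≤ ∑' q, G q := Summable.le_tsum hGsum _ (fun _ _ => hGnn _)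
    have hG0 : G (0,0) = f (0,0) := by rw [hG, Gterm, if_pos rfl, hf]
    have hGc : G c = f c := by rw [hG, hc, Gterm, if_pos (by omega), hf]
    have hst : G (0,0) ≤ G c := by rw [hG0, hGc]; exact hfsle
    have hGnn0 : 0 ≤ G (0,0) := hGnn _
    rw [SINR, SINR, hSNR1, hSNR2, hINR1, hINR2]
    obtain ⟨s0, hs0⟩ : ∃ r, r = G (0,0) := ⟨_, rfl⟩
    obtain ⟨t0, ht0⟩ : ∃ r, r = G c := ⟨_, rfl⟩
    obtain ⟨S0, hS0⟩ : ∃ r, r = ∑' q, G q := ⟨_, rfl⟩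
    rw [← hs0, ← ht0, ← hS0]
    have hst' : s0 ≤ t0 := by rw [hs0, ht0]; exact hst
    have hbs' : s0 ≤ S0 := by rw [hs0, hS0]; exact hbs
    have hbt' : t0 ≤ S0 := by rw [ht0, hS0]; exact hbt
    have h0s : 0 ≤ s0 := by rw [hs0]; exact hGnn0
    have h0S' : 0 ≤ S0 := by rw [hS0]; exact h0S
    have hm1 : 0 ≤ (p / σ2) * (S0 - s0) :=
      mul_nonneg hpσ.le (by linarith only [hbs'])
    have hm2 : 0 ≤ (p / σ2) * (S0 - t0) :=
      mul_nonneg hpσ.le (by linarith only [hbt'])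
    have pos1 : 0 < (p / σ2) * (S0 - s0) + 1 := by linarith only [hm1]
    have pos2 : 0 < (p / σ2) * (S0 - t0) + 1 := by linarith only [hm2]
    rw [div_le_div_iff₀ pos1 pos2]
    have hkeyf : 0 ≤ (p / σ2) * (t0 - s0) * ((p / σ2) * S0 + 1) :=
      mul_nonneg (mul_nonneg hpσ.le (by linarith only [hst']))
        (by positivity)
    nlinarith [hkeyf]
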